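/- Let z^0 ∈ ℝ^n and define the DANA-D iteration z^{k+1} = z^k − α A_q(z^k) ∇g(z^k) with step size α = (1−ε)/((n−1)(1+ε)(1−ε^{q+1})), where g(z) = Σ_{i=1}^n f_i(x^0_i + L_i z), H(x) = diag(f_i''(x_i)), and A_q(z) = Σ_{p=0}^q (I_n − L H(x^0 + Lz) L)^p. Assume there exists ε ∈ [0,1) such that for every x ∈ ℝ^n and every v ∈ ℝ^n with 1_n^⊤ v = 0, |v^⊤ (I_n − L H(x) L) v| ≤ ε ‖v‖². Then for every q ∈ ℕ and every iterate z = z^k with successor z^+ = z^{k+1}, it holds that g(z^+) − g(z) ≤ − ((1−ε)^4 (1+ε(−ε)^q)^2 / (2(n−1)^2 (1+ε)^3 (1−ε^{2(q+1)}))) ‖z − z*‖², where z* is the unique minimizer of g satisfying 1_n^⊤ z* = 1_n^⊤ z^0. -/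

import Mathlib

open Filter Matrix

private lemma dot_self_nonneg' {n : ℕ} (v : Fin n → ℝ) : 0 ≤ v ⬝ᵥ v :=
  Finset.sum_nonneg fun _ _ => mul_self_nonneg _

private lemma dot_cs' {n : ℕ} (a b : Fin n → ℝ) : (a ⬝ᵥ b)^2 ≤ (a ⬝ᵥ a) * (b ⬝ᵥ b) := by
  simpa [dotProduct, sq] using Finset.sum_mul_sq_le_sq_mul_sq Finset.univ a b

/-- monotonicity from derivative nonneg on `[0,1]` -/
private lemma mono01 (F F' : ℝ → ℝ) (hF : ∀ t, HasDerivAt F (F' t) t)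
    (h0 : ∀ t ∈ Set.Icc (0:ℝ) 1, 0 ≤ F' t) :
    ∀ t ∈ Set.Icc (0:ℝ) 1, F 0 ≤ F t := by
  have hd : Differentiable ℝ F := fun t => (hF t).differentiableAt
  have hm : MonotoneOn F (Set.Icc 0 1) :=
    monotoneOn_of_deriv_nonneg (convex_Icc 0 1) hd.continuous.continuousOn
      (fun x _ => (hd x).differentiableWithinAt)
      (fun x hx => by
        rw [interior_Icc] at hx
        rw [(hF x).deriv]
        exact h0 x ⟨le_of_lt hx.1, le_of_lt hx.2⟩)
  intro t ht
  exact hm ⟨le_rfl, zero_le_one⟩ ht ht.1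

private lemma lower_le (η η' : ℝ → ℝ) (h : ∀ t, HasDerivAt η (η' t) t)
    (m : ℝ) (hm : ∀ t ∈ Set.Icc (0:ℝ) 1, m ≤ η' t) : η 0 + m ≤ η 1 := by
  have := mono01 (fun t => η t - m * t) (fun t => η' t - m)
    (fun t => ((h t).sub (((hasDerivAt_id t).const_mul m).congr_deriv (by ring))))
    (fun t ht => by linarith [hm t ht]) 1 ⟨zero_le_one, le_rfl⟩
  simp at this
  linarith

private lemma taylor_le (φ φ' φ'' : ℝ → ℝ)
    (h1 : ∀ t, HasDerivAt φ (φ' t) t) (h2 : ∀ t, HasDerivAt φ' (φ'' t) t)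
    (K : ℝ) (hK : ∀ t ∈ Set.Icc (0:ℝ) 1, φ'' t ≤ K) :
    φ 1 ≤ φ 0 + φ' 0 + K / 2 := by
  have step1 : ∀ t ∈ Set.Icc (0:ℝ) 1, φ' t ≤ φ' 0 + K * t := by
    intro t ht
    have := mono01 (fun s => φ' 0 + K * s - φ' s) (fun s => K - φ'' s)
      (fun s => ((((hasDerivAt_id s).const_mul K).congr_deriv (by ring)).const_add (φ' 0)).sub
        (h2 s))
      (fun s hs => by linarith [hK s hs]) t ht
    simp at this
    linarith
  have step2 := mono01 (fun t => φ 0 + t * φ' 0 + K * t^2 / 2 - φ t)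
      (fun t => φ' 0 + K * t - φ' t)
      (fun t => by
        have ha : HasDerivAt (fun t : ℝ => φ 0 + t * φ' 0 + K * t^2/2) (φ' 0 + K * t) t := by
          have hb : HasDerivAt (fun t : ℝ => t * φ' 0) (φ' 0) t := by
            simpa using (hasDerivAt_id t).mul_const (φ' 0)
          have hc : HasDerivAt (fun t : ℝ => K * t^2 / 2) (K * t) t := by
            have := ((hasDerivAt_pow 2 t).const_mul K).div_const 2
            simpa using this.congr_deriv (by ring)
          simpa using (hb.const_add (φ 0)).fun_add hc
        exact ha.sub (h1 t))
      (fun t ht => by linarith [step1 t ht]) 1 ⟨zero_le_one, le_rfl⟩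
  simp at step2
  linarith

private lemma df1 {f : ℝ → ℝ} (hf : Differentiable ℝ f) (c b t : ℝ) :
    HasDerivAt (fun s => f (c + s * b)) (b * deriv f (c + t * b)) t := by
  have h1 : HasDerivAt (fun s : ℝ => c + s * b) b t := by
    simpa using ((hasDerivAt_id t).mul_const b).const_add c
  simpa [mul_comm, Function.comp_def] using (hf (c + t * b)).hasDerivAt.comp t h1

private lemma deriv_diff_of_contDiff2 {f : ℝ → ℝ} (hf : ContDiff ℝ 2 f) :
    Differentiable ℝ (deriv f) := by
  have h2 : ContDiff ℝ ((1:ℕ∞)+1) f := hf.of_le (by norm_num)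
  exact ((contDiff_succ_iff_deriv.mp h2).2.2).differentiable (by norm_num)

private lemma sum_mulVec' {n : ℕ} {ι : Type*} (s : Finset ι)
    (B : ι → Matrix (Fin n) (Fin n) ℝ) (v : Fin n → ℝ) :
    (∑ p ∈ s, B p) *ᵥ v = ∑ p ∈ s, (B p *ᵥ v) := by
  ext i
  simp only [Matrix.mulVec, dotProduct, Matrix.sum_apply, Finset.sum_apply,
    Finset.sum_mul]
  rw [Finset.sum_comm]

private lemma dot_sum' {n : ℕ} {ι : Type*} (s : Finset ι)
    (w : ι → Fin n → ℝ) (v : Fin n → ℝ) :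
    v ⬝ᵥ (∑ p ∈ s, w p) = ∑ p ∈ s, v ⬝ᵥ w p := by
  simp only [dotProduct, Finset.sum_apply, Finset.mul_sum]
  rw [Finset.sum_comm]

private lemma chain1 {n : ℕ} (L : Matrix (Fin n) (Fin n) ℝ) (hLsymm : L.IsSymm)
    (f : Fin n → ℝ → ℝ) (hf : ∀ i, ContDiff ℝ 2 (f i)) (x0 : Fin n → ℝ)
    (g : (Fin n → ℝ) → ℝ) (hg : g = fun z => ∑ i, f i (x0 i + (L *ᵥ z) i))
    (gradg : (Fin n → ℝ) → (Fin n → ℝ))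
    (hgradg : gradg = fun z => L *ᵥ fun i => deriv (f i) (x0 i + (L *ᵥ z) i))
    (y dv : Fin n → ℝ) (t : ℝ) :
    HasDerivAt (fun s => g (y + s • dv)) (dv ⬝ᵥ gradg (y + t • dv)) t := by
  have harg : ∀ (s : ℝ) i, x0 i + (L *ᵥ (y + s • dv)) i
      = (x0 i + (L *ᵥ y) i) + s * (L *ᵥ dv) i := by
    intro s i
    rw [Matrix.mulVec_add, Matrix.mulVec_smul]
    simp [add_assoc]
  have hfn : (fun s => g (y + s • dv))
      = fun s => ∑ i, f i ((x0 i + (L *ᵥ y) i) + s * (L *ᵥ dv) i) := by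
    funext s
    rw [hg]
    exact Finset.sum_congr rfl fun i _ => by rw [harg s i]
  rw [hfn]
  have hval : dv ⬝ᵥ gradg (y + t • dv)
      = ∑ i, (L *ᵥ dv) i * deriv (f i) ((x0 i + (L *ᵥ y) i) + t * (L *ᵥ dv) i) := by
    simp only [hgradg]
    rw [Matrix.dotProduct_mulVec, ← Matrix.mulVec_transpose, hLsymm.eq]
    simp only [dotProduct]
    exact Finset.sum_congr rfl fun i _ => by rw [harg t i]
  rw [hval]
  exact HasDerivAt.fun_sum fun i _ => df1 ((hf i).differentiable (by norm_num)) _ _ t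

private lemma chain2 {n : ℕ} (L : Matrix (Fin n) (Fin n) ℝ) (hLsymm : L.IsSymm)
    (f : Fin n → ℝ → ℝ) (hf : ∀ i, ContDiff ℝ 2 (f i)) (x0 : Fin n → ℝ)
    (H : (Fin n → ℝ) → Matrix (Fin n) (Fin n) ℝ)
    (hH : H = fun x => Matrix.diagonal fun i => deriv (deriv (f i)) (x i))
    (gradg : (Fin n → ℝ) → (Fin n → ℝ))
    (hgradg : gradg = fun z => L *ᵥ fun i => deriv (f i) (x0 i + (L *ᵥ z) i))
    (y dv : Fin n → ℝ) (t : ℝ) :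
    HasDerivAt (fun s => dv ⬝ᵥ gradg (y + s • dv))
      ((L *ᵥ dv) ⬝ᵥ (H (fun i => x0 i + (L *ᵥ (y + t • dv)) i) *ᵥ (L *ᵥ dv))) t := by
  have harg : ∀ (s : ℝ) i, x0 i + (L *ᵥ (y + s • dv)) i
      = (x0 i + (L *ᵥ y) i) + s * (L *ᵥ dv) i := by
    intro s i
    rw [Matrix.mulVec_add, Matrix.mulVec_smul]
    simp [add_assoc]
  have hfn : (fun s => dv ⬝ᵥ gradg (y + s • dv))
      = fun s => ∑ i, (L *ᵥ dv) i * deriv (f i) ((x0 i + (L *ᵥ y) i) + s * (L *ᵥ dv) i) := by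
    funext s
    simp only [hgradg]
    rw [Matrix.dotProduct_mulVec, ← Matrix.mulVec_transpose, hLsymm.eq]
    simp only [dotProduct]
    exact Finset.sum_congr rfl fun i _ => by rw [harg s i]
  rw [hfn]
  have hval : (L *ᵥ dv) ⬝ᵥ (H (fun i => x0 i + (L *ᵥ (y + t • dv)) i) *ᵥ (L *ᵥ dv))
      = ∑ i, (L *ᵥ dv) i *
          ((L *ᵥ dv) i * deriv (deriv (f i)) ((x0 i + (L *ᵥ y) i) + t * (L *ᵥ dv) i)) := by
    simp only [hH, dotProduct, Matrix.mulVec_diagonal]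
    exact Finset.sum_congr rfl fun i _ => by rw [harg t i]; ring
  rw [hval]
  exact HasDerivAt.fun_sum fun i _ =>
    (df1 (deriv_diff_of_contDiff2 (hf i)) _ _ t).const_mul _

set_option maxHeartbeats 3000000 in
/-- **DANA-D linear convergence** (Theorem: Linear Convergence of DANA-D).
With the specific step size `α = (1-ε)/((n-1)(1+ε)(1-ε^{q+1}))`, each DANA-D step
decreases `g` by at least a fixed multiple of the squared distance to the unique
minimizer `z*` of `g` with `1ᵀ z* = 1ᵀ z⁰`. -/
theorem dana_d_linear_convergence
    (n : ℕ) (hn : 2 ≤ n)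
    (L : Matrix (Fin n) (Fin n) ℝ)
    (hLsymm : L.IsSymm) (hLpsd : L.PosSemidef)
    (hL1 : L *ᵥ (fun _ => (1 : ℝ)) = 0)
    (hLker : ∀ v : Fin n → ℝ, L *ᵥ v = 0 → ∃ c : ℝ, v = fun _ => c)
    (f : Fin n → ℝ → ℝ) (δ Δ : Fin n → ℝ)
    (hf : ∀ i, ContDiff ℝ 2 (f i))
    (hδ : ∀ i, 0 < δ i)
    (hbounds : ∀ i s, δ i ≤ deriv (deriv (f i)) s ∧ deriv (deriv (f i)) s ≤ Δ i)
    (x0 : Fin n → ℝ)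
    (g : (Fin n → ℝ) → ℝ)
    (hg : g = fun z => ∑ i, f i (x0 i + (L *ᵥ z) i))
    (H : (Fin n → ℝ) → Matrix (Fin n) (Fin n) ℝ)
    (hH : H = fun x => Matrix.diagonal fun i => deriv (deriv (f i)) (x i))
    (gradg : (Fin n → ℝ) → (Fin n → ℝ))
    (hgradg : gradg = fun z => L *ᵥ fun i => deriv (f i) (x0 i + (L *ᵥ z) i))
    (q : ℕ)
    (A : (Fin n → ℝ) → Matrix (Fin n) (Fin n) ℝ)
    (hA : A = fun z => ∑ p ∈ Finset.range (q + 1),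
      (1 - L * H (fun i => x0 i + (L *ᵥ z) i) * L) ^ p)
    (ε : ℝ) (hε0 : 0 ≤ ε) (hε1 : ε < 1)
    (hspec : ∀ x v : Fin n → ℝ, (∑ i, v i) = 0 →
      |v ⬝ᵥ ((1 - L * H x * L) *ᵥ v)| ≤ ε * (v ⬝ᵥ v))
    (α : ℝ)
    (hα : α = (1 - ε) / ((n - 1 : ℝ) * (1 + ε) * (1 - ε ^ (q + 1))))
    (z0 : Fin n → ℝ) (z : ℕ → Fin n → ℝ)
    (hz0 : z 0 = z0)
    (hiter : ∀ k, z (k + 1) = z k - α • (A (z k) *ᵥ gradg (z k)))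
    (zstar : Fin n → ℝ)
    (hzstar_min : ∀ w, g zstar ≤ g w)
    (hzstar_sum : ∑ i, zstar i = ∑ i, z0 i) :
    ∀ k, g (z (k + 1)) - g (z k) ≤
      -(((1 - ε) ^ 4 * (1 + ε * (-ε) ^ q) ^ 2) /
          (2 * ((n : ℝ) - 1) ^ 2 * (1 + ε) ^ 3 * (1 - ε ^ (2 * (q + 1))))) *
        (∑ i, (z k i - zstar i) ^ 2) := by
  intro k
  -- ## basic numeric facts
  have hx0 : (0:ℝ) ≤ ε ^ (q+1) := pow_nonneg hε0 _
  have hxle : ε ^ (q+1) ≤ ε := by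
    simpa using pow_le_pow_of_le_one hε0 hε1.le (Nat.le_add_left 1 q)
  have hx1 : ε ^ (q+1) < 1 := lt_of_le_of_lt hxle hε1
  have hN : (1:ℝ) ≤ (n:ℝ) - 1 := by
    have : (2:ℝ) ≤ (n:ℝ) := by exact_mod_cast hn
    linarith
  have hαpos : 0 < α := by
    rw [hα]
    apply div_pos (by linarith)
    apply mul_pos (mul_pos (by linarith) (by linarith)) (by linarith)
  -- ## structural facts about L
  have hLsym' : ∀ i j : Fin n, L i j = L j i := by
    intro i j
    have h := congrFun (congrFun hLsymm.eq i) j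
    simpa [Matrix.transpose_apply] using h.symm
  have sumL : ∀ v : Fin n → ℝ, ∑ i, (L *ᵥ v) i = 0 := by
    intro v
    have hcol : ∀ j, ∑ i, L i j = 0 := by
      intro j
      have h1 := congrFun hL1 j
      simp only [Matrix.mulVec, dotProduct, mul_one, Pi.zero_apply] at h1
      calc ∑ i, L i j = ∑ i, L j i := Finset.sum_congr rfl fun i _ => hLsym' i j
        _ = 0 := h1
    calc ∑ i, (L *ᵥ v) i = ∑ i, ∑ j, L i j * v j := rfl
      _ = ∑ j, ∑ i, L i j * v j := Finset.sum_comm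
      _ = ∑ j, (∑ i, L i j) * v j := by simp [Finset.sum_mul]
      _ = 0 := by simp [hcol]
  have dotSym : ∀ (B : Matrix (Fin n) (Fin n) ℝ), Bᵀ = B → ∀ v w : Fin n → ℝ,
      v ⬝ᵥ (B *ᵥ w) = (B *ᵥ v) ⬝ᵥ w := by
    intro B hB v w
    rw [Matrix.dotProduct_mulVec, ← Matrix.mulVec_transpose, hB]
  have Hsymm : ∀ x : Fin n → ℝ, (H x)ᵀ = H x := by
    intro x; simp [hH]
  have Mxsym : ∀ x : Fin n → ℝ, (1 - L * H x * L)ᵀ = 1 - L * H x * L := by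
    intro x
    rw [Matrix.transpose_sub, Matrix.transpose_one, Matrix.transpose_mul, Matrix.transpose_mul,
      hLsymm.eq, Hsymm x, Matrix.mul_assoc]
  have MxVec : ∀ (x v : Fin n → ℝ),
      (1 - L * H x * L) *ᵥ v = v - L *ᵥ (H x *ᵥ (L *ᵥ v)) := by
    intro x v
    rw [Matrix.sub_mulVec, Matrix.one_mulVec, Matrix.mulVec_mulVec, Matrix.mulVec_mulVec,
      Matrix.mul_assoc]
  have MxS : ∀ (x v : Fin n → ℝ), (∑ i, v i) = 0 →
      ∑ i, ((1 - L * H x * L) *ᵥ v) i = 0 := by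
    intro x v hv
    rw [MxVec]
    simp only [Pi.sub_apply]
    rw [Finset.sum_sub_distrib, hv, sumL]
    ring
  have powSx : ∀ (x : Fin n → ℝ) (p : ℕ) (v : Fin n → ℝ), (∑ i, v i) = 0 →
      ∑ i, (((1 - L * H x * L) ^ p) *ᵥ v) i = 0 := by
    intro x p
    induction p with
    | zero => intro v hv; simpa [Matrix.one_mulVec] using hv
    | succ p ih =>
      intro v hv
      rw [pow_succ', ← Matrix.mulVec_mulVec]
      exact MxS x _ (ih v hv)
  have gradS : ∀ y' : Fin n → ℝ, ∑ i, gradg y' i = 0 := by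
    intro y'; simp only [hgradg]; exact sumL _
  have AS : ∀ (y' v : Fin n → ℝ), (∑ i, v i) = 0 → ∑ i, (A y' *ᵥ v) i = 0 := by
    intro y' v hv
    simp only [hA]
    rw [sum_mulVec']
    calc ∑ i, (∑ p ∈ Finset.range (q+1),
          ((1 - L * H (fun i => x0 i + (L *ᵥ y') i) * L) ^ p *ᵥ v)) i
        = ∑ p ∈ Finset.range (q+1), ∑ i,
          ((1 - L * H (fun i => x0 i + (L *ᵥ y') i) * L) ^ p *ᵥ v) i := by
          simp only [Finset.sum_apply]
          exact Finset.sum_comm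
      _ = 0 := Finset.sum_eq_zero fun p _ => powSx _ p v hv
  have sumIter : ∀ m, ∑ i, z m i = ∑ i, z0 i := by
    intro m
    induction m with
    | zero => rw [hz0]
    | succ m ih =>
      rw [hiter m]
      simp only [Pi.sub_apply, Pi.smul_apply, smul_eq_mul]
      rw [Finset.sum_sub_distrib, ← Finset.mul_sum, AS (z m) (gradg (z m)) (gradS (z m)),
        mul_zero, sub_zero, ih]
  -- ## quadratic-form consequences of the spectral assumption
  have quadId : ∀ (x v : Fin n → ℝ),
      v ⬝ᵥ ((1 - L * H x * L) *ᵥ v) = v ⬝ᵥ v - (L *ᵥ v) ⬝ᵥ (H x *ᵥ (L *ᵥ v)) := by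
    intro x v
    rw [MxVec, dotProduct_sub]
    congr 1
    rw [dotSym L hLsymm.eq]
  have spec1 : ∀ (x v : Fin n → ℝ), (∑ i, v i) = 0 →
      (1-ε) * (v ⬝ᵥ v) ≤ (L *ᵥ v) ⬝ᵥ (H x *ᵥ (L *ᵥ v)) ∧
      (L *ᵥ v) ⬝ᵥ (H x *ᵥ (L *ᵥ v)) ≤ (1+ε) * (v ⬝ᵥ v) := by
    intro x v hv
    have h := abs_le.mp (hspec x v hv)
    have hq := quadId x v
    constructor <;> [linarith [h.2]; linarith [h.1]]
  -- ## the matrix M at the current iterate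
  set xk : Fin n → ℝ := fun i => x0 i + (L *ᵥ z k) i with hxk
  set M : Matrix (Fin n) (Fin n) ℝ := 1 - L * H xk * L with hMdef
  set r : Fin n → ℝ := gradg (z k) with hrdef
  have rS : ∑ i, r i = 0 := gradS (z k)
  have Msym : Mᵀ = M := Mxsym xk
  have MpowSym : ∀ p : ℕ, (M^p)ᵀ = M^p := fun p => by rw [Matrix.transpose_pow, Msym]
  have MS : ∀ v : Fin n → ℝ, (∑ i, v i) = 0 → ∑ i, (M *ᵥ v) i = 0 := fun v hv => MxS xk v hv
  have powS : ∀ (p : ℕ) (v : Fin n → ℝ), (∑ i, v i) = 0 → ∑ i, ((M^p) *ᵥ v) i = 0 :=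
    fun p v hv => powSx xk p v hv
  have hMq : ∀ v : Fin n → ℝ, (∑ i, v i) = 0 → |v ⬝ᵥ (M *ᵥ v)| ≤ ε * (v ⬝ᵥ v) :=
    fun v hv => hspec xk v hv
  -- polarization
  have polar : ∀ a b : Fin n → ℝ, (∑ i, a i) = 0 → (∑ i, b i) = 0 →
      a ⬝ᵥ (M *ᵥ b) ≤ ε/2 * (a ⬝ᵥ a + b ⬝ᵥ b) := by
    intro a b ha hb
    have h1 := abs_le.mp (hMq (a+b) (by
      simp only [Pi.add_apply]; rw [Finset.sum_add_distrib, ha, hb]; ring))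
    have h2 := abs_le.mp (hMq (a-b) (by
      simp only [Pi.sub_apply]; rw [Finset.sum_sub_distrib, ha, hb]; ring))
    have hba : b ⬝ᵥ (M *ᵥ a) = a ⬝ᵥ (M *ᵥ b) := by
      rw [dotSym M Msym b a, dotProduct_comm]
    have e1 : (a+b) ⬝ᵥ (M *ᵥ (a+b)) = a ⬝ᵥ (M *ᵥ a) + 2*(a ⬝ᵥ (M *ᵥ b)) + b ⬝ᵥ (M *ᵥ b) := by
      rw [Matrix.mulVec_add, dotProduct_add, add_dotProduct,
        add_dotProduct, hba]
      ring
    have e2 : (a-b) ⬝ᵥ (M *ᵥ (a-b)) = a ⬝ᵥ (M *ᵥ a) - 2*(a ⬝ᵥ (M *ᵥ b)) + b ⬝ᵥ (M *ᵥ b) := by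
      rw [Matrix.mulVec_sub, dotProduct_sub, sub_dotProduct,
        sub_dotProduct, hba]
      ring
    have n1 : (a+b) ⬝ᵥ (a+b) = a ⬝ᵥ a + 2*(a ⬝ᵥ b) + b ⬝ᵥ b := by
      rw [dotProduct_add, add_dotProduct, add_dotProduct,
        dotProduct_comm b a]
      ring
    have n2 : (a-b) ⬝ᵥ (a-b) = a ⬝ᵥ a - 2*(a ⬝ᵥ b) + b ⬝ᵥ b := by
      rw [dotProduct_sub, sub_dotProduct, sub_dotProduct,
        dotProduct_comm b a]
      ring
    rw [n1] at h1
    rw [n2] at h2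
    linarith [h1.2, h2.1, e1, e2]
  have contract : ∀ v : Fin n → ℝ, (∑ i, v i) = 0 →
      (M *ᵥ v) ⬝ᵥ (M *ᵥ v) ≤ ε^2 * (v ⬝ᵥ v) := by
    intro v hv
    have hwS := MS v hv
    rcases eq_or_lt_of_le hε0 with hz | hz
    · have hp := polar (M *ᵥ v) v hwS hv
      rw [← hz] at hp
      have h0 : (M *ᵥ v) ⬝ᵥ (M *ᵥ v) ≤ 0 := by
        have : (M *ᵥ v) ⬝ᵥ (M *ᵥ v) = (M *ᵥ v) ⬝ᵥ (M *ᵥ v) := rfl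
        linarith [hp]
      nlinarith [dot_self_nonneg' v]
    · set c := Real.sqrt ε⁻¹ with hc
      have hεinv : (0:ℝ) < ε⁻¹ := by positivity
      have hc2 : c^2 = ε⁻¹ := Real.sq_sqrt hεinv.le
      have hcpos : 0 < c := Real.sqrt_pos.mpr hεinv
      have haS : ∑ i, (c • (M *ᵥ v)) i = 0 := by
        simp only [Pi.smul_apply, smul_eq_mul]
        rw [← Finset.mul_sum, hwS, mul_zero]
      have hbS : ∑ i, (c⁻¹ • v) i = 0 := by
        simp only [Pi.smul_apply, smul_eq_mul]
        rw [← Finset.mul_sum, hv, mul_zero]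
      have hp := polar (c • (M *ᵥ v)) (c⁻¹ • v) haS hbS
      have hl : (c • (M *ᵥ v)) ⬝ᵥ (M *ᵥ (c⁻¹ • v)) = (M *ᵥ v) ⬝ᵥ (M *ᵥ v) := by
        rw [Matrix.mulVec_smul, smul_dotProduct, dotProduct_smul]
        field_simp
        rw [smul_smul, mul_one_div_cancel hcpos.ne', one_smul]
      have hr1 : (c • (M *ᵥ v)) ⬝ᵥ (c • (M *ᵥ v)) = c^2 * ((M *ᵥ v) ⬝ᵥ (M *ᵥ v)) := by
        rw [smul_dotProduct, dotProduct_smul]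
        push_cast [smul_eq_mul]
        ring
      have hr2 : (c⁻¹ • v) ⬝ᵥ (c⁻¹ • v) = (c^2)⁻¹ * (v ⬝ᵥ v) := by
        rw [smul_dotProduct, dotProduct_smul]
        push_cast [smul_eq_mul]
        rw [← mul_assoc]
        congr 1
        rw [sq]
        field_simp
      rw [hl, hr1, hr2, hc2] at hp
      have hee : ε⁻¹⁻¹ = ε := inv_inv ε
      rw [hee] at hp
      -- hp : Mv⬝Mv ≤ ε/2 * (ε⁻¹ * (Mv⬝Mv) + ε * (v⬝v))
      have hεne : ε ≠ 0 := ne_of_gt hz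
      have : ε/2 * (ε⁻¹ * ((M *ᵥ v) ⬝ᵥ (M *ᵥ v)) + ε * (v ⬝ᵥ v))
          = (1/2) * ((M *ᵥ v) ⬝ᵥ (M *ᵥ v)) + ε^2/2 * (v ⬝ᵥ v) := by
        field_simp
      rw [this] at hp
      linarith
  have powContract : ∀ (p : ℕ) (v : Fin n → ℝ), (∑ i, v i) = 0 →
      ((M^p) *ᵥ v) ⬝ᵥ ((M^p) *ᵥ v) ≤ ε^(2*p) * (v ⬝ᵥ v) := by
    intro p
    induction p with
    | zero => intro v hv; simp [Matrix.one_mulVec]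
    | succ p ih =>
      intro v hv
      have h1 : (M^(p+1)) *ᵥ v = (M^p) *ᵥ (M *ᵥ v) := by
        rw [pow_succ, ← Matrix.mulVec_mulVec]
      rw [h1]
      calc ((M^p) *ᵥ (M *ᵥ v)) ⬝ᵥ ((M^p) *ᵥ (M *ᵥ v))
          ≤ ε^(2*p) * ((M *ᵥ v) ⬝ᵥ (M *ᵥ v)) := ih (M *ᵥ v) (MS v hv)
        _ ≤ ε^(2*p) * (ε^2 * (v ⬝ᵥ v)) :=
            mul_le_mul_of_nonneg_left (contract v hv) (pow_nonneg hε0 _)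
        _ = ε^(2*(p+1)) * (v ⬝ᵥ v) := by rw [show 2*(p+1) = 2*p + 2 by ring, pow_add]; ring
  have dotPow : ∀ (p : ℕ) (v : Fin n → ℝ), (∑ i, v i) = 0 →
      |v ⬝ᵥ ((M^p) *ᵥ v)| ≤ ε^p * (v ⬝ᵥ v) := by
    intro p v hv
    have hcs := dot_cs' v ((M^p) *ᵥ v)
    have hpc := powContract p v hv
    have hvv := dot_self_nonneg' v
    have h2 : (v ⬝ᵥ ((M^p) *ᵥ v))^2 ≤ (ε^p * (v ⬝ᵥ v))^2 := by
      have he : ε^(2*p) = (ε^p)^2 := by rw [mul_comm, pow_mul]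
      calc (v ⬝ᵥ ((M^p) *ᵥ v))^2 ≤ (v ⬝ᵥ v) * (((M^p) *ᵥ v) ⬝ᵥ ((M^p) *ᵥ v)) := hcs
        _ ≤ (v ⬝ᵥ v) * (ε^(2*p) * (v ⬝ᵥ v)) := mul_le_mul_of_nonneg_left hpc hvv
        _ = (ε^p * (v ⬝ᵥ v))^2 := by rw [he]; ring
    have hnn : 0 ≤ ε^p * (v ⬝ᵥ v) := mul_nonneg (pow_nonneg hε0 p) hvv
    nlinarith [sq_abs (v ⬝ᵥ ((M^p) *ᵥ v)), abs_nonneg (v ⬝ᵥ ((M^p) *ᵥ v))]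
  have dotsplit : ∀ (a b : ℕ) (v : Fin n → ℝ),
      v ⬝ᵥ ((M^(a+b)) *ᵥ v) = ((M^a) *ᵥ v) ⬝ᵥ ((M^b) *ᵥ v) := by
    intro a b v
    rw [pow_add, ← Matrix.mulVec_mulVec, dotSym (M^a) (MpowSym a)]
  -- lower bound for the quadratic form of A
  have qAlow : ∀ v : Fin n → ℝ, (∑ i, v i) = 0 →
      (1-ε) * (v ⬝ᵥ v) ≤ ∑ p ∈ Finset.range (q + 1), v ⬝ᵥ ((M^p) *ᵥ v) := by
    intro v hv
    have pairNN : ∀ j : ℕ, 0 ≤ v ⬝ᵥ ((M^(2*j)) *ᵥ v) + v ⬝ᵥ ((M^(2*j+1)) *ᵥ v) := by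
      intro j
      have hwS : ∑ i, ((M^j) *ᵥ v) i = 0 := powS j v hv
      have h1 : v ⬝ᵥ ((M^(2*j)) *ᵥ v) = ((M^j) *ᵥ v) ⬝ᵥ ((M^j) *ᵥ v) := by
        rw [show 2*j = j + j by ring, dotsplit]
      have h2 : v ⬝ᵥ ((M^(2*j+1)) *ᵥ v) = ((M^j) *ᵥ v) ⬝ᵥ (M *ᵥ ((M^j) *ᵥ v)) := by
        rw [show 2*j+1 = j + (j+1) by ring, dotsplit]
        congr 1
        rw [pow_succ', ← Matrix.mulVec_mulVec]
      have h3 := abs_le.mp (hMq ((M^j) *ᵥ v) hwS)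
      rw [h1, h2]
      nlinarith [dot_self_nonneg' ((M^j) *ᵥ v), h3.1]
    have evenNN : ∀ j : ℕ, 0 ≤ v ⬝ᵥ ((M^(2*j)) *ᵥ v) := by
      intro j
      rw [show 2*j = j + j by ring, dotsplit]
      exact dot_self_nonneg' _
    have pair0 : (1-ε) * (v ⬝ᵥ v) ≤ v ⬝ᵥ ((M^0) *ᵥ v) + v ⬝ᵥ ((M^1) *ᵥ v) := by
      have h3 := abs_le.mp (hMq v hv)
      simp only [pow_zero, Matrix.one_mulVec, pow_one]
      linarith [h3.1]
    have claimE : ∀ m : ℕ,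
        (1-ε) * (v ⬝ᵥ v) ≤ ∑ p ∈ Finset.range (2*m+2), v ⬝ᵥ ((M^p) *ᵥ v) := by
      intro m
      induction m with
      | zero => simpa [Finset.sum_range_succ] using pair0
      | succ m ih =>
        have e : 2*(m+1)+2 = (2*m+2) + 1 + 1 := by ring
        rw [e, Finset.sum_range_succ, Finset.sum_range_succ]
        have hp := pairNN (m+1)
        rw [show 2*(m+1) = 2*m+2 by ring] at hp
        linarith
    rcases Nat.even_or_odd q with ⟨m, hm⟩ | ⟨m, hm⟩
    · cases m with
      | zero =>
        have hq0 : q = 0 := by omega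
        subst hq0
        simpa [Finset.sum_range_succ] using
          (by nlinarith [dot_self_nonneg' v] : (1-ε) * (v ⬝ᵥ v) ≤ v ⬝ᵥ v)
      | succ m' =>
        have e : q + 1 = (2*m'+2) + 1 := by omega
        rw [e, Finset.sum_range_succ]
        have h1 := claimE m'
        have h2 := evenNN (m'+1)
        rw [show 2*(m'+1) = 2*m'+2 by ring] at h2
        linarith
    · have e : q + 1 = 2*m+2 := by omega
      rw [e]
      exact claimE m
  have qAup : ∀ v : Fin n → ℝ, (∑ i, v i) = 0 →
      ∑ p ∈ Finset.range (q + 1), v ⬝ᵥ ((M^p) *ᵥ v)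
        ≤ (∑ p ∈ Finset.range (q + 1), ε^p) * (v ⬝ᵥ v) := by
    intro v hv
    rw [Finset.sum_mul]
    exact Finset.sum_le_sum fun p _ => le_trans (le_abs_self _) (dotPow p v hv)
  -- ## the matrix A at the current iterate and its quadratic form
  set am : ℝ := ∑ p ∈ Finset.range (q + 1), ε^p with hamdef
  have ham1 : 1 ≤ am := by
    have h0 : (0:ℕ) ∈ Finset.range (q+1) := Finset.mem_range.mpr (Nat.succ_pos q)
    have := Finset.single_le_sum (f := fun p => ε^p)
      (fun p _ => pow_nonneg hε0 p) h0
    simpa using this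
  have hamform : am = (1 - ε^(q+1))/(1-ε) := by
    have hne : ε ≠ 1 := ne_of_lt hε1
    rw [hamdef, geom_sum_eq hne]
    rw [div_eq_div_iff (by intro h; exact hne (by linarith [sub_eq_zero.mp h]))
      (by intro h; exact hne (by linarith [sub_eq_zero.mp h]))]
    ring
  have hAmrep : A (z k) *ᵥ r = ∑ p ∈ Finset.range (q + 1), ((M^p) *ᵥ r) := by
    simp only [hA]
    rw [sum_mulVec']
  set u : Fin n → ℝ := A (z k) *ᵥ r with hudef
  have uS : ∑ i, u i = 0 := AS (z k) r rS
  have hqlow : ∀ v : Fin n → ℝ, (∑ i, v i) = 0 →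
      (1-ε) * (v ⬝ᵥ v) ≤ v ⬝ᵥ (A (z k) *ᵥ v) := by
    intro v hv
    have : A (z k) *ᵥ v = ∑ p ∈ Finset.range (q + 1), ((M^p) *ᵥ v) := by
      simp only [hA]; rw [sum_mulVec']
    rw [this, dot_sum']
    exact qAlow v hv
  have hqup : ∀ v : Fin n → ℝ, (∑ i, v i) = 0 →
      v ⬝ᵥ (A (z k) *ᵥ v) ≤ am * (v ⬝ᵥ v) := by
    intro v hv
    have : A (z k) *ᵥ v = ∑ p ∈ Finset.range (q + 1), ((M^p) *ᵥ v) := by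
      simp only [hA]; rw [sum_mulVec']
    rw [this, dot_sum']
    exact qAup v hv
  have hAdotsym : ∀ v w : Fin n → ℝ, v ⬝ᵥ (A (z k) *ᵥ w) = w ⬝ᵥ (A (z k) *ᵥ v) := by
    intro v w
    have hAsym : (A (z k))ᵀ = A (z k) := by
      simp only [hA]
      rw [Matrix.transpose_sum]
      exact Finset.sum_congr rfl fun p _ => by
        rw [Matrix.transpose_pow, Mxsym]
    rw [dotSym _ hAsym, dotProduct_comm]
  -- the shifted operator P v = A v - (1-ε) v
  set Pv : (Fin n → ℝ) → (Fin n → ℝ) := fun v => A (z k) *ᵥ v - (1-ε) • v with hPv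
  have Pdot : ∀ v w : Fin n → ℝ, v ⬝ᵥ Pv w = v ⬝ᵥ (A (z k) *ᵥ w) - (1-ε) * (v ⬝ᵥ w) := by
    intro v w
    rw [hPv]
    dsimp only
    rw [dotProduct_sub, dotProduct_smul]
    norm_num
  have PS : ∀ v : Fin n → ℝ, (∑ i, v i) = 0 → ∑ i, Pv v i = 0 := by
    intro v hv
    rw [hPv]
    dsimp only
    simp only [Pi.sub_apply, Pi.smul_apply, smul_eq_mul]
    rw [Finset.sum_sub_distrib, AS (z k) v hv, ← Finset.mul_sum, hv]
    ring
  have qP0 : ∀ v : Fin n → ℝ, (∑ i, v i) = 0 → 0 ≤ v ⬝ᵥ Pv v := by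
    intro v hv
    rw [Pdot]
    linarith only [hqlow v hv]
  have qPc : ∀ v : Fin n → ℝ, (∑ i, v i) = 0 →
      v ⬝ᵥ Pv v ≤ (am - (1-ε)) * (v ⬝ᵥ v) := by
    intro v hv
    rw [Pdot]
    linarith only [hqup v hv]
  have Psymdot : ∀ v w : Fin n → ℝ, v ⬝ᵥ Pv w = w ⬝ᵥ Pv v := by
    intro v w
    rw [Pdot, Pdot, hAdotsym v w, dotProduct_comm v w]
  have CSP : ∀ v w : Fin n → ℝ, (∑ i, v i) = 0 → (∑ i, w i) = 0 →
      (v ⬝ᵥ Pv w)^2 ≤ (v ⬝ᵥ Pv v) * (w ⬝ᵥ Pv w) := by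
    intro v w hv hw
    have key : ∀ t : ℝ, 0 ≤ (v ⬝ᵥ Pv v) + 2*t*(v ⬝ᵥ Pv w) + t^2*(w ⬝ᵥ Pv w) := by
      intro t
      have hS : ∑ i, (v + t • w) i = 0 := by
        simp only [Pi.add_apply, Pi.smul_apply, smul_eq_mul]
        rw [Finset.sum_add_distrib, hv, ← Finset.mul_sum, hw]
        ring
      have h0 := qP0 (v + t • w) hS
      have hexp : Pv (v + t • w) = Pv v + t • Pv w := by
        rw [hPv]
        dsimp only
        rw [Matrix.mulVec_add, Matrix.mulVec_smul]
        funext i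
        simp only [Pi.sub_apply, Pi.add_apply, Pi.smul_apply, smul_eq_mul]
        ring
      rw [hexp] at h0
      have hq : (v + t • w) ⬝ᵥ (Pv v + t • Pv w)
          = (v ⬝ᵥ Pv v) + 2*t*(v ⬝ᵥ Pv w) + t^2*(w ⬝ᵥ Pv w) := by
        rw [dotProduct_add, add_dotProduct, add_dotProduct,
          dotProduct_smul, smul_dotProduct, smul_dotProduct,
          dotProduct_smul]
        simp only [smul_eq_mul]
        rw [Psymdot w v]
        ring
      rw [hq] at h0
      exact h0
    have hB0 : 0 ≤ w ⬝ᵥ Pv w := qP0 w hw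
    rcases eq_or_lt_of_le hB0 with hB | hB
    · have hC : v ⬝ᵥ Pv w = 0 := by
        by_contra hC
        have hk := key (-((v ⬝ᵥ Pv v) + 1)/(2*(v ⬝ᵥ Pv w)))
        rw [← hB] at hk
        have h3 : (v ⬝ᵥ Pv v) + 2*(-((v ⬝ᵥ Pv v) + 1)/(2*(v ⬝ᵥ Pv w)))*(v ⬝ᵥ Pv w)
            + (-((v ⬝ᵥ Pv v) + 1)/(2*(v ⬝ᵥ Pv w)))^2*(0:ℝ) = -1 := by
          field_simp
          ring
        rw [h3] at hk
        linarith only [hk]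
      rw [hC, ← hB]
      norm_num
    · have hk := key (-(v ⬝ᵥ Pv w)/(w ⬝ᵥ Pv w))
      have hBne : (w ⬝ᵥ Pv w) ≠ 0 := ne_of_gt hB
      have hexp : (v ⬝ᵥ Pv v) + 2*(-(v ⬝ᵥ Pv w)/(w ⬝ᵥ Pv w))*(v ⬝ᵥ Pv w)
          + (-(v ⬝ᵥ Pv w)/(w ⬝ᵥ Pv w))^2*(w ⬝ᵥ Pv w)
          = (v ⬝ᵥ Pv v) - (v ⬝ᵥ Pv w)^2/(w ⬝ᵥ Pv w) := by
        field_simp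
        ring
      rw [hexp] at hk
      have := (div_le_iff₀ hB).mp (by linarith only [hk] : (v ⬝ᵥ Pv w)^2/(w ⬝ᵥ Pv w) ≤ (v ⬝ᵥ Pv v))
      linarith only [this]
  -- the key bound on ‖P r‖²
  have hs0 : 0 ≤ r ⬝ᵥ Pv r := qP0 r rS
  have hXbound : (Pv r) ⬝ᵥ (Pv r) ≤ (am - (1-ε)) * (r ⬝ᵥ Pv r) := by
    have pS : ∑ i, Pv r i = 0 := PS r rS
    have hc := CSP (Pv r) r pS rS
    have h1 : (Pv r) ⬝ᵥ Pv (Pv r) ≤ (am - (1-ε)) * ((Pv r) ⬝ᵥ (Pv r)) := qPc (Pv r) pS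
    have hX0 : 0 ≤ (Pv r) ⬝ᵥ (Pv r) := dot_self_nonneg' _
    have hcP0 : 0 ≤ am - (1-ε) := by linarith
    rcases eq_or_lt_of_le hX0 with hX | hX
    · rw [← hX]
      exact mul_nonneg hcP0 hs0
    · -- X² ≤ cP * X * s  ⟹ X ≤ cP * s
      nlinarith only [hc, mul_le_mul_of_nonneg_right h1 hs0, hX]
  -- ## decomposition of u
  have hu2 : u = Pv r + (1-ε) • r := by
    rw [hPv]
    dsimp only
    rw [sub_add_cancel]
  have hru2 : r ⬝ᵥ u = (r ⬝ᵥ Pv r) + (1-ε) * (r ⬝ᵥ r) := by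
    rw [hu2, dotProduct_add, dotProduct_smul]
    simp [smul_eq_mul]
  have huu : u ⬝ᵥ u ≤ (am + (1-ε)) * (r ⬝ᵥ Pv r) + (1-ε)^2 * (r ⬝ᵥ r) := by
    have hexp : u ⬝ᵥ u = (Pv r) ⬝ᵥ (Pv r) + 2*(1-ε)*(r ⬝ᵥ Pv r) + (1-ε)^2*(r ⬝ᵥ r) := by
      rw [hu2]
      rw [dotProduct_add, add_dotProduct, add_dotProduct,
        dotProduct_smul, smul_dotProduct, smul_dotProduct,
        dotProduct_smul]
      simp only [smul_eq_mul]
      rw [dotProduct_comm (Pv r) r]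
      ring
    rw [hexp]
    linarith only [hXbound]
  -- ## the iterate step
  have hz1 : z (k+1) = z k + (-α) • u := by
    rw [hiter k, ← hrdef, ← hudef, sub_eq_add_neg, ← neg_smul]
  set dv : Fin n → ℝ := (-α) • u with hdv
  have dvS : ∑ i, dv i = 0 := by
    rw [hdv]
    simp only [Pi.smul_apply, smul_eq_mul]
    rw [← Finset.mul_sum, uS, mul_zero]
  -- ## descent lemma
  have hdescent : g (z (k+1)) ≤ g (z k) + dv ⬝ᵥ r + (1+ε) * (dv ⬝ᵥ dv) / 2 := by
    have h1 := fun t => chain1 L hLsymm f hf x0 g hg gradg hgradg (z k) dv t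
    have h2 := fun t => chain2 L hLsymm f hf x0 H hH gradg hgradg (z k) dv t
    have hT := taylor_le (fun s => g (z k + s • dv)) (fun t => dv ⬝ᵥ gradg (z k + t • dv))
      (fun t => (L *ᵥ dv) ⬝ᵥ (H (fun i => x0 i + (L *ᵥ (z k + t • dv)) i) *ᵥ (L *ᵥ dv)))
      h1 h2 ((1+ε) * (dv ⬝ᵥ dv))
      (fun t _ => (spec1 (fun i => x0 i + (L *ᵥ (z k + t • dv)) i) dv dvS).2)
    simp only [one_smul, zero_smul, add_zero] at hT
    rw [← hrdef] at hT
    rw [hz1]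
    linarith only [hT]
  -- ## dot product computations for the step
  have hdot1 : dv ⬝ᵥ r = -α * (r ⬝ᵥ u) := by
    calc dv ⬝ᵥ r = (-α) • (u ⬝ᵥ r) := by rw [hdv, smul_dotProduct]
      _ = -α * (r ⬝ᵥ u) := by rw [dotProduct_comm u r]; simp [smul_eq_mul]
  have hdot2 : dv ⬝ᵥ dv = α^2 * (u ⬝ᵥ u) := by
    calc dv ⬝ᵥ dv = (-α) • ((-α) • (u ⬝ᵥ u)) := by
          rw [hdv, smul_dotProduct, dotProduct_smul]
      _ = α^2 * (u ⬝ᵥ u) := by simp only [smul_eq_mul]; ring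
  have hRnn : 0 ≤ r ⬝ᵥ r := dot_self_nonneg' r
  -- ## step size identities
  have hne1 : (1:ℝ) - ε ≠ 0 := by linarith
  have hne2 : (1:ℝ) + ε ≠ 0 := by linarith
  have hne3 : (1:ℝ) - ε^(q+1) ≠ 0 := by linarith
  have hne4 : ((n:ℝ)) - 1 ≠ 0 := by linarith
  have hamkey : α * ((1+ε) * am) = 1/((n:ℝ)-1) := by
    rw [hα, hamform]
    field_simp
  have hinv1 : 1/((n:ℝ)-1) ≤ 1 := by
    rw [div_le_one (by linarith : (0:ℝ) < (n:ℝ)-1)]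
    linarith
  have hc2nn : (0:ℝ) ≤ (1+ε)*α^2/2 := by positivity
  have hiii : (1+ε)*α^2/2 * (am + (1-ε)) ≤ α := by
    have h31 : am + (1-ε) ≤ 2*am := by linarith
    have h32 : (1+ε)*α^2/2 * (am + (1-ε)) ≤ (1+ε)*α^2/2 * (2*am) :=
      mul_le_mul_of_nonneg_left h31 hc2nn
    have h33 : (1+ε)*α^2/2 * (2*am) = α * (α * ((1+ε)*am)) := by ring
    rw [h33, hamkey] at h32
    have h34 : α * (1/((n:ℝ)-1)) ≤ α * 1 := mul_le_mul_of_nonneg_left hinv1 hαpos.le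
    linarith only [h32, h34]
  have hiv : (1+ε)*α^2/2 * (1-ε)^2 ≤ α * (1-ε) / 2 := by
    have h41 : (1+ε)*α^2/2 * (1-ε) ≤ (1+ε)*α^2/2 * am :=
      mul_le_mul_of_nonneg_left (by linarith) hc2nn
    have h42 : (1+ε)*α^2/2 * am = (α/2) * (α * ((1+ε)*am)) := by ring
    rw [h42, hamkey] at h41
    have h43 : (α/2) * (1/((n:ℝ)-1)) ≤ (α/2) * 1 :=
      mul_le_mul_of_nonneg_left hinv1 (by linarith)
    have h44 : (1+ε)*α^2/2 * (1-ε) ≤ α/2 := by linarith only [h41, h43]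
    calc (1+ε)*α^2/2 * (1-ε)^2 = ((1+ε)*α^2/2 * (1-ε)) * (1-ε) := by ring
      _ ≤ (α/2) * (1-ε) := mul_le_mul_of_nonneg_right h44 (by linarith)
      _ = α * (1-ε)/2 := by ring
  -- ## the per-step energy bound
  have hE : dv ⬝ᵥ r + (1+ε) * (dv ⬝ᵥ dv) / 2 ≤ -(α*(1-ε)/2) * (r ⬝ᵥ r) := by
    rw [hdot1, hdot2, hru2]
    have h5 : (1+ε) * (α^2 * (u ⬝ᵥ u)) / 2
        ≤ (1+ε)*α^2/2 * ((am + (1-ε)) * (r ⬝ᵥ Pv r) + (1-ε)^2 * (r ⬝ᵥ r)) := by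
      calc (1+ε) * (α^2 * (u ⬝ᵥ u)) / 2 = (1+ε)*α^2/2 * (u ⬝ᵥ u) := by ring
        _ ≤ _ := mul_le_mul_of_nonneg_left huu hc2nn
    have h6 := mul_le_mul_of_nonneg_right hiii hs0
    have h7 := mul_le_mul_of_nonneg_right hiv hRnn
    linarith only [h5, h6, h7]
  -- ## the gradient vanishes at the minimizer
  have gradzero : gradg zstar = 0 := by
    funext j
    have hder := chain1 L hLsymm f hf x0 g hg gradg hgradg zstar ((Pi.single j 1 : Fin n → ℝ)) 0
    have hmin : IsLocalMin (fun s : ℝ => g (zstar + s • (Pi.single j 1 : Fin n → ℝ))) 0 := by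
      apply Filter.Eventually.of_forall
      intro s
      simp only [zero_smul, add_zero]
      exact hzstar_min _
    have h0 := hmin.hasDerivAt_eq_zero hder
    rw [zero_smul, add_zero] at h0
    have hsingle : (Pi.single j 1 : Fin n → ℝ) ⬝ᵥ gradg zstar = gradg zstar j := by
      rw [single_dotProduct]
      ring
    rw [hsingle] at h0
    simpa using h0
  -- ## strong convexity along the segment to the minimizer
  have wvS : ∑ i, (z k - zstar) i = 0 := by
    simp only [Pi.sub_apply]
    rw [Finset.sum_sub_distrib, sumIter k, hzstar_sum, sub_self]
  have hzw : zstar + (z k - zstar) = z k := by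
    funext i
    simp
  have hwr : (1-ε) * ((z k - zstar) ⬝ᵥ (z k - zstar)) ≤ (z k - zstar) ⬝ᵥ r := by
    have h2 := fun t => chain2 L hLsymm f hf x0 H hH gradg hgradg zstar (z k - zstar) t
    have hlow := lower_le (fun s => (z k - zstar) ⬝ᵥ gradg (zstar + s • (z k - zstar)))
      (fun t => (L *ᵥ (z k - zstar)) ⬝ᵥ
        (H (fun i => x0 i + (L *ᵥ (zstar + t • (z k - zstar))) i) *ᵥ (L *ᵥ (z k - zstar))))
      h2 ((1-ε) * ((z k - zstar) ⬝ᵥ (z k - zstar)))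
      (fun t _ => (spec1 _ (z k - zstar) wvS).1)
    simp only [zero_smul, add_zero, one_smul, hzw, gradzero, dotProduct_zero] at hlow
    rw [← hrdef] at hlow
    linarith only [hlow]
  have hRw : (1-ε)^2 * ((z k - zstar) ⬝ᵥ (z k - zstar)) ≤ r ⬝ᵥ r := by
    have hW0 : 0 ≤ (z k - zstar) ⬝ᵥ (z k - zstar) := dot_self_nonneg' _
    have hcs := dot_cs' (z k - zstar) r
    rcases eq_or_lt_of_le hW0 with h | h
    · rw [← h]
      simpa using hRnn
    · have hsq : ((1-ε) * ((z k - zstar) ⬝ᵥ (z k - zstar)))^2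
          ≤ ((z k - zstar) ⬝ᵥ r)^2 :=
        pow_le_pow_left₀ (mul_nonneg (by linarith only [hε1]) hW0) hwr 2
      nlinarith only [hsq, hcs, h]
  -- ## putting the pieces together
  have hfin1 : g (z (k+1)) - g (z k) ≤ -(α*(1-ε)/2) * (r ⬝ᵥ r) := by
    linarith only [hdescent, hE]
  have hfin2 : -(α*(1-ε)/2) * (r ⬝ᵥ r)
      ≤ -(α*(1-ε)^3/2) * ((z k - zstar) ⬝ᵥ (z k - zstar)) := by
    have hca : (0:ℝ) ≤ α*(1-ε)/2 := by
      have := mul_nonneg hαpos.le (by linarith : (0:ℝ) ≤ 1-ε)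
      linarith
    have := mul_le_mul_of_nonneg_left hRw hca
    linarith only [this]
  -- numeric comparison between the two constants
  have hnum : ((1 - ε) ^ 4 * (1 + ε * (-ε) ^ q) ^ 2) /
      (2 * ((n : ℝ) - 1) ^ 2 * (1 + ε) ^ 3 * (1 - ε ^ (2 * (q + 1))))
      ≤ α*(1-ε)^3/2 := by
    have hx2 : ε ^ (2*(q+1)) = (ε^(q+1))^2 := by rw [mul_comm, pow_mul]
    have habs : |ε * (-ε)^q| = ε^(q+1) := by
      rw [abs_mul, abs_pow, abs_neg, abs_of_nonneg hε0, pow_succ]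
      ring
    have hyle : ε * (-ε)^q ≤ ε^(q+1) := le_trans (le_abs_self _) (le_of_eq habs)
    have hysq : (ε * (-ε)^q)^2 = (ε^(q+1))^2 := by rw [← sq_abs, habs]
    have hsq2 : (1 + ε * (-ε)^q)^2 ≤ (1 + ε^(q+1))^2 := by nlinarith only [hyle, hysq]
    have hden2 : (0:ℝ) < 2 * ((n:ℝ)-1) * (1+ε) * (1 - ε^(q+1)) := by
      apply mul_pos (mul_pos (mul_pos two_pos (by linarith)) (by linarith)) (by linarith)
    have hden1 : (0:ℝ) < 2 * ((n:ℝ)-1)^2 * (1+ε)^3 * (1 - ε^(2*(q+1))) := by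
      rw [hx2]
      have hx2lt : (ε^(q+1))^2 < 1 := by nlinarith only [hx0, hx1]
      apply mul_pos (mul_pos (mul_pos two_pos (pow_pos (by linarith) 2))
        (pow_pos (by linarith) 3)) (by linarith)
    have hrhs : α*(1-ε)^3/2 = (1-ε)^4 / (2 * ((n:ℝ)-1) * (1+ε) * (1 - ε^(q+1))) := by
      rw [hα]
      field_simp
    rw [hrhs, div_le_div_iff₀ hden1 hden2, hx2]
    have hmain : (1 + ε*(-ε)^q)^2 ≤ ((n:ℝ)-1) * (1+ε)^2 * (1 + ε^(q+1)) := by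
      have t1 : (1 + ε^(q+1))^2 ≤ (1+ε) * (1 + ε^(q+1)) := by
        have := mul_le_mul_of_nonneg_right
          (by linarith : (1:ℝ) + ε^(q+1) ≤ 1 + ε) (by linarith : (0:ℝ) ≤ 1 + ε^(q+1))
        calc (1 + ε^(q+1))^2 = (1 + ε^(q+1)) * (1 + ε^(q+1)) := sq (1 + ε^(q+1)) ▸ rfl
          _ ≤ (1+ε) * (1 + ε^(q+1)) := this
      have t2 : (1+ε) * (1 + ε^(q+1)) ≤ ((n:ℝ)-1) * (1+ε)^2 * (1 + ε^(q+1)) := by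
        have h1 : (1:ℝ)+ε ≤ ((n:ℝ)-1) * (1+ε)^2 := by nlinarith only [hN, hε0]
        exact mul_le_mul_of_nonneg_right h1 (by linarith)
      linarith only [hsq2, t1, t2]
    have hK0 : (0:ℝ) ≤ (1-ε)^4 * (2 * ((n:ℝ)-1) * (1+ε) * (1 - ε^(q+1))) :=
      mul_nonneg (by positivity) hden2.le
    have hstep := mul_le_mul_of_nonneg_right hmain hK0
    calc (1 - ε) ^ 4 * (1 + ε * (-ε) ^ q) ^ 2 *
          (2 * (((n:ℝ)) - 1) * (1 + ε) * (1 - ε ^ (q + 1)))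
        = (1 + ε * (-ε) ^ q)^2 *
          ((1-ε)^4 * (2 * (((n:ℝ)) - 1) * (1+ε) * (1 - ε^(q+1)))) := by ring
      _ ≤ (((n:ℝ)-1) * (1+ε)^2 * (1 + ε^(q+1))) *
          ((1-ε)^4 * (2 * (((n:ℝ)) - 1) * (1+ε) * (1 - ε^(q+1)))) := hstep
      _ = (1 - ε) ^ 4 *
          (2 * (((n:ℝ)) - 1) ^ 2 * (1 + ε) ^ 3 * (1 - (ε ^ (q + 1)) ^ 2)) := by ring
  have hWnn : 0 ≤ (z k - zstar) ⬝ᵥ (z k - zstar) := dot_self_nonneg' _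
  have hsum_eq : (z k - zstar) ⬝ᵥ (z k - zstar) = ∑ i, (z k i - zstar i)^2 := by
    simp only [dotProduct, Pi.sub_apply, sq]
  calc g (z (k+1)) - g (z k)
      ≤ -(α*(1-ε)^3/2) * ((z k - zstar) ⬝ᵥ (z k - zstar)) := le_trans hfin1 hfin2
    _ ≤ -(((1 - ε) ^ 4 * (1 + ε * (-ε) ^ q) ^ 2) /
          (2 * ((n : ℝ) - 1) ^ 2 * (1 + ε) ^ 3 * (1 - ε ^ (2 * (q + 1))))) *
        ((z k - zstar) ⬝ᵥ (z k - zstar)) := by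
        linarith only [mul_le_mul_of_nonneg_right hnum hWnn]
    _ = _ := by rw [hsum_eq]
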